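/- Let Λ_{A₄} be the A₄ root lattice, i.e. ℤ⁴ with Gram matrix [[2,−1,0,0],[−1,2,−1,0],[0,−1,2,−1],[0,0,−1,2]]. Then the group SO₀(Λ_{A₄}) of determinant-1 automorphisms of Λ_{A₄} that induce the identity map on the discriminant group Λ_{A₄}*/Λ_{A₄} is isomorphic to the alternating group Alt(5); in particular it has order 60. -/

import Mathlib

/-!
STATEMENT 9: The group SO₀(Λ_{A₄}) of determinant-1 automorphisms of the A₄ root
lattice that induce the identity map on the discriminant group is isomorphic to the
alternating group Alt(5); in particular it has order 60.
-/

open Matrix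

open Matrix

def IsIntVec {n : ℕ} (x : Fin n → ℚ) : Prop := ∀ i, ∃ c : ℤ, x i = (c : ℚ)

lemma IsIntVec.add {n : ℕ} {u v : Fin n → ℚ} (hu : IsIntVec u) (hv : IsIntVec v) :
    IsIntVec (u + v) := by
  intro i
  obtain ⟨c, hc⟩ := hu i
  obtain ⟨d, hd⟩ := hv i
  exact ⟨c + d, by simp [hc, hd]⟩

lemma IsIntVec.neg {n : ℕ} {u : Fin n → ℚ} (hu : IsIntVec u) : IsIntVec (-u) := by
  intro i
  obtain ⟨c, hc⟩ := hu i
  exact ⟨-c, by simp [hc]⟩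

lemma mapq_mul {n : ℕ} (M N : Matrix (Fin n) (Fin n) ℤ) :
    (M * N).map ((↑) : ℤ → ℚ) = M.map ((↑) : ℤ → ℚ) * N.map ((↑) : ℤ → ℚ) := by
  ext i j
  simp [Matrix.mul_apply]

lemma mapq_one {n : ℕ} : ((1 : Matrix (Fin n) (Fin n) ℤ)).map ((↑) : ℤ → ℚ) = 1 :=
  Matrix.map_one _ Int.cast_zero Int.cast_one

lemma intvec_vecMul {n : ℕ} {x : Fin n → ℚ} (hx : IsIntVec x)
    (Z : Matrix (Fin n) (Fin n) ℤ) :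
    IsIntVec (Matrix.vecMul x (Z.map ((↑) : ℤ → ℚ))) := by
  intro i
  choose c hc using hx
  refine ⟨∑ j, c j * Z j i, ?_⟩
  simp only [Matrix.vecMul, dotProduct, Matrix.map_apply]
  push_cast
  exact Finset.sum_congr rfl fun j _ => by rw [hc j]

lemma dual_pres {n : ℕ} (Q : Matrix (Fin n) (Fin n) ℤ) (a : (Matrix (Fin n) (Fin n) ℤ)ˣ)
    (ha : (a : Matrix (Fin n) (Fin n) ℤ) * Q * (a : Matrix (Fin n) (Fin n) ℤ)ᵀ = Q)
    {x : Fin n → ℚ} (hx : IsIntVec (Matrix.vecMul x (Q.map ((↑) : ℤ → ℚ)))) :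
    IsIntVec (Matrix.vecMul (Matrix.vecMul x ((a : Matrix (Fin n) (Fin n) ℤ).map ((↑) : ℤ → ℚ)))
      (Q.map ((↑) : ℤ → ℚ))) := by
  have key : (a : Matrix (Fin n) (Fin n) ℤ) * Q = Q * ((a⁻¹ : (Matrix (Fin n) (Fin n) ℤ)ˣ) : Matrix (Fin n) (Fin n) ℤ)ᵀ := by
    have h1 : (a : Matrix (Fin n) (Fin n) ℤ)ᵀ * ((a⁻¹ : (Matrix (Fin n) (Fin n) ℤ)ˣ) : Matrix (Fin n) (Fin n) ℤ)ᵀ = 1 := by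
      rw [← Matrix.transpose_mul, Units.inv_mul, Matrix.transpose_one]
    calc (a : Matrix (Fin n) (Fin n) ℤ) * Q
        = ((a : Matrix (Fin n) (Fin n) ℤ) * Q * (a : Matrix (Fin n) (Fin n) ℤ)ᵀ) *
            ((a⁻¹ : (Matrix (Fin n) (Fin n) ℤ)ˣ) : Matrix (Fin n) (Fin n) ℤ)ᵀ := by
          rw [Matrix.mul_assoc, h1, Matrix.mul_one]
      _ = Q * ((a⁻¹ : (Matrix (Fin n) (Fin n) ℤ)ˣ) : Matrix (Fin n) (Fin n) ℤ)ᵀ := by rw [ha]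
  rw [Matrix.vecMul_vecMul, ← mapq_mul, key, mapq_mul, ← Matrix.vecMul_vecMul]
  exact intvec_vecMul hx _

def SOzero {n : ℕ} (Q : Matrix (Fin n) (Fin n) ℤ) : Subgroup (Matrix (Fin n) (Fin n) ℤ)ˣ where
  carrier := {U | (U : Matrix (Fin n) (Fin n) ℤ) * Q * (U : Matrix (Fin n) (Fin n) ℤ)ᵀ = Q ∧
      (U : Matrix (Fin n) (Fin n) ℤ).det = 1 ∧
      ∀ x : Fin n → ℚ, IsIntVec (Matrix.vecMul x (Q.map ((↑) : ℤ → ℚ))) →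
        IsIntVec (Matrix.vecMul x ((U : Matrix (Fin n) (Fin n) ℤ).map ((↑) : ℤ → ℚ)) - x)}
  one_mem' := by
    refine ⟨by simp, by simp, fun x hx i => ⟨0, ?_⟩⟩
    simp [mapq_one]
  mul_mem' := by
    rintro a b ⟨ha1, ha2, ha3⟩ ⟨hb1, hb2, hb3⟩
    have hab1 : ((a * b : (Matrix (Fin n) (Fin n) ℤ)ˣ) : Matrix (Fin n) (Fin n) ℤ) * Q *
        ((a * b : (Matrix (Fin n) (Fin n) ℤ)ˣ) : Matrix (Fin n) (Fin n) ℤ)ᵀ = Q := by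
      rw [Units.val_mul, Matrix.transpose_mul]
      calc (a : Matrix (Fin n) (Fin n) ℤ) * b * Q * ((b : Matrix (Fin n) (Fin n) ℤ)ᵀ * (a : Matrix (Fin n) (Fin n) ℤ)ᵀ)
          = (a : Matrix (Fin n) (Fin n) ℤ) * ((b : Matrix (Fin n) (Fin n) ℤ) * Q * (b : Matrix (Fin n) (Fin n) ℤ)ᵀ) * (a : Matrix (Fin n) (Fin n) ℤ)ᵀ := by
            noncomm_ring
        _ = Q := by rw [hb1, ha1]
    refine ⟨hab1, by rw [Units.val_mul, Matrix.det_mul, ha2, hb2, one_mul], fun x hx => ?_⟩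
    have hy := dual_pres Q a ha1 hx
    set y := Matrix.vecMul x ((a : Matrix (Fin n) (Fin n) ℤ).map ((↑) : ℤ → ℚ)) with hydef
    have h1 : IsIntVec (Matrix.vecMul y ((b : Matrix (Fin n) (Fin n) ℤ).map ((↑) : ℤ → ℚ)) - y) :=
      hb3 y hy
    have h2 : IsIntVec (y - x) := ha3 x hx
    have hrw : Matrix.vecMul x (((a * b : (Matrix (Fin n) (Fin n) ℤ)ˣ) : Matrix (Fin n) (Fin n) ℤ).map ((↑) : ℤ → ℚ)) - x =
        (Matrix.vecMul y ((b : Matrix (Fin n) (Fin n) ℤ).map ((↑) : ℤ → ℚ)) - y) + (y - x) := by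
      rw [Units.val_mul, mapq_mul, ← Matrix.vecMul_vecMul, ← hydef]
      abel
    rw [hrw]
    exact h1.add h2
  inv_mem' := by
    rintro a ⟨ha1, ha2, ha3⟩
    have hi1 : ((a⁻¹ : (Matrix (Fin n) (Fin n) ℤ)ˣ) : Matrix (Fin n) (Fin n) ℤ) * Q *
        ((a⁻¹ : (Matrix (Fin n) (Fin n) ℤ)ˣ) : Matrix (Fin n) (Fin n) ℤ)ᵀ = Q := by
      have h1 : (a : Matrix (Fin n) (Fin n) ℤ)ᵀ * ((a⁻¹ : (Matrix (Fin n) (Fin n) ℤ)ˣ) : Matrix (Fin n) (Fin n) ℤ)ᵀ = 1 := by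
        rw [← Matrix.transpose_mul, Units.inv_mul, Matrix.transpose_one]
      have h2 : ((a⁻¹ : (Matrix (Fin n) (Fin n) ℤ)ˣ) : Matrix (Fin n) (Fin n) ℤ) * (a : Matrix (Fin n) (Fin n) ℤ) = 1 := Units.inv_mul a
      calc ((a⁻¹ : (Matrix (Fin n) (Fin n) ℤ)ˣ) : Matrix (Fin n) (Fin n) ℤ) * Q * ((a⁻¹ : (Matrix (Fin n) (Fin n) ℤ)ˣ) : Matrix (Fin n) (Fin n) ℤ)ᵀ
          = ((a⁻¹ : (Matrix (Fin n) (Fin n) ℤ)ˣ) : Matrix (Fin n) (Fin n) ℤ) * ((a : Matrix (Fin n) (Fin n) ℤ) * Q * (a : Matrix (Fin n) (Fin n) ℤ)ᵀ) * ((a⁻¹ : (Matrix (Fin n) (Fin n) ℤ)ˣ) : Matrix (Fin n) (Fin n) ℤ)ᵀ := by rw [ha1]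
        _ = (((a⁻¹ : (Matrix (Fin n) (Fin n) ℤ)ˣ) : Matrix (Fin n) (Fin n) ℤ) * (a : Matrix (Fin n) (Fin n) ℤ)) * Q * ((a : Matrix (Fin n) (Fin n) ℤ)ᵀ * ((a⁻¹ : (Matrix (Fin n) (Fin n) ℤ)ˣ) : Matrix (Fin n) (Fin n) ℤ)ᵀ) := by noncomm_ring
        _ = Q := by rw [h1, h2, Matrix.one_mul, Matrix.mul_one]
    have hi2 : ((a⁻¹ : (Matrix (Fin n) (Fin n) ℤ)ˣ) : Matrix (Fin n) (Fin n) ℤ).det = 1 := by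
      have := Matrix.det_mul ((a⁻¹ : (Matrix (Fin n) (Fin n) ℤ)ˣ) : Matrix (Fin n) (Fin n) ℤ) (a : Matrix (Fin n) (Fin n) ℤ)
      rw [Units.inv_mul, Matrix.det_one, ha2, mul_one] at this
      exact this.symm
    refine ⟨hi1, hi2, fun x hx => ?_⟩
    have hy := dual_pres Q a⁻¹ hi1 hx
    set y := Matrix.vecMul x (((a⁻¹ : (Matrix (Fin n) (Fin n) ℤ)ˣ) : Matrix (Fin n) (Fin n) ℤ).map ((↑) : ℤ → ℚ)) with hydef
    have h1 : IsIntVec (Matrix.vecMul y ((a : Matrix (Fin n) (Fin n) ℤ).map ((↑) : ℤ → ℚ)) - y) :=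
      ha3 y hy
    have hyx : Matrix.vecMul y ((a : Matrix (Fin n) (Fin n) ℤ).map ((↑) : ℤ → ℚ)) = x := by
      rw [hydef, Matrix.vecMul_vecMul, ← mapq_mul, Units.inv_mul, mapq_one, Matrix.vecMul_one]
    rw [hyx] at h1
    have : y - x = -(x - y) := by abel
    rw [this]
    exact h1.neg


/-- The Gram matrix of the A₄ root lattice. -/
def QA4 : Matrix (Fin 4) (Fin 4) ℤ := !![2,-1,0,0; -1,2,-1,0; 0,-1,2,-1; 0,0,-1,2]


section Aux
def Emat : Matrix (Fin 4) (Fin 5) ℤ := !![1,-1,0,0,0; 0,1,-1,0,0; 0,0,1,-1,0; 0,0,0,1,-1]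
def Smat : Matrix (Fin 5) (Fin 4) ℤ := !![1,1,1,1; 0,1,1,1; 0,0,1,1; 0,0,0,1; 0,0,0,0]
def Jmat : Matrix (Fin 5) (Fin 5) ℤ := Matrix.of fun _ l => if l = 4 then 1 else 0
def Pm (σ : Equiv.Perm (Fin 5)) : Matrix (Fin 5) (Fin 5) ℤ := σ.toPEquiv.toMatrix
def matOf (σ : Equiv.Perm (Fin 5)) : Matrix (Fin 4) (Fin 4) ℤ := Emat * Pm σ * Smat

lemma Pm_J (σ : Equiv.Perm (Fin 5)) : Pm σ * Jmat = Jmat := by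
  ext k l
  simp [Pm, Jmat, Matrix.mul_apply, PEquiv.toMatrix_apply, Equiv.toPEquiv_apply]

lemma Pm_mul (σ τ : Equiv.Perm (Fin 5)) : Pm σ * Pm τ = Pm (τ * σ) := by
  rw [Pm, Pm, Pm, ← PEquiv.toMatrix_trans, ← Equiv.toPEquiv_trans]; rfl

lemma Pm_one : Pm 1 = 1 := by
  rw [Pm]; show (Equiv.refl (Fin 5)).toPEquiv.toMatrix = 1
  rw [Equiv.toPEquiv_refl, PEquiv.toMatrix_refl]

lemma E_Pm_J (σ : Equiv.Perm (Fin 5)) : Emat * Pm σ * Jmat = 0 := by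
  rw [Matrix.mul_assoc, Pm_J]; decide

lemma matOf_mul (σ τ : Equiv.Perm (Fin 5)) : matOf σ * matOf τ = matOf (τ * σ) := by
  have hSE : Smat * Emat = 1 - Jmat := by decide
  have h : matOf σ * matOf τ = Emat * Pm σ * (Smat * Emat) * Pm τ * Smat := by
    simp [matOf, Matrix.mul_assoc]
  rw [h, hSE, Matrix.mul_sub, Matrix.mul_one, Matrix.sub_mul, Matrix.sub_mul, E_Pm_J,
    Matrix.zero_mul, Matrix.zero_mul, sub_zero, matOf, Matrix.mul_assoc, Matrix.mul_assoc,
    ← Matrix.mul_assoc (Pm σ), Pm_mul, Matrix.mul_assoc]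

lemma matOf_one : matOf 1 = 1 := by rw [matOf, Pm_one, Matrix.mul_one]; decide

lemma Pm_transpose (σ : Equiv.Perm (Fin 5)) : (Pm σ)ᵀ = Pm σ⁻¹ := by
  rw [Pm, Pm, ← PEquiv.toMatrix_symm, ← Equiv.toPEquiv_symm]; rfl

-- Gram preservation for all σ
lemma matOf_gram (σ : Equiv.Perm (Fin 5)) : matOf σ * QA4 * (matOf σ)ᵀ = QA4 := by
  have hQ : QA4 = Emat * Ematᵀ := by decide
  have hSE : Smat * Emat = 1 - Jmat := by decide
  have hK : Emat * Pm σ * (1 - Jmat) = Emat * Pm σ := by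
    rw [Matrix.mul_sub, Matrix.mul_one, E_Pm_J, sub_zero]
  calc matOf σ * QA4 * (matOf σ)ᵀ
      = (Emat * Pm σ * (Smat * Emat)) * (Emat * Pm σ * (Smat * Emat))ᵀ := by
        rw [matOf, hQ]; simp only [Matrix.transpose_mul, Matrix.mul_assoc]
    _ = (Emat * Pm σ) * (Emat * Pm σ)ᵀ := by rw [hSE, hK]
    _ = Emat * (Pm σ * (Pm σ)ᵀ) * Ematᵀ := by
        simp only [Matrix.transpose_mul, Matrix.mul_assoc]
    _ = QA4 := by
        rw [Pm_transpose, Pm_mul, inv_mul_cancel, Pm_one, Matrix.mul_one, ← hQ]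

lemma matOf_det (σ : Equiv.Perm (Fin 5)) (hσ : σ ∈ alternatingGroup (Fin 5)) :
    (matOf σ).det = 1 := by
  rw [← Equiv.Perm.closure_three_cycles_eq_alternating] at hσ
  induction hσ using Subgroup.closure_induction with
  | mem τ hτ =>
    have h3 : τ ^ 3 = 1 := by rw [← Equiv.Perm.IsThreeCycle.orderOf hτ, pow_orderOf_eq_one]
    have hm : matOf τ * matOf τ * matOf τ = 1 := by
      have h1 : τ * τ * τ = 1 := by rw [← h3, pow_succ, pow_succ, pow_one]
      have h2 : τ * (τ * τ) = 1 := by rw [← mul_assoc, h1]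
      rw [matOf_mul, matOf_mul]
      first
      | rw [h1, matOf_one]
      | rw [h2, matOf_one]
    have hd : (matOf τ).det ^ 3 = 1 := by
      have h := congrArg Matrix.det hm
      rw [Matrix.det_mul, Matrix.det_mul, Matrix.det_one] at h
      rw [pow_succ, pow_succ, pow_one]; linarith [h]
    nlinarith [hd, sq_nonneg ((matOf τ).det - 1), sq_nonneg ((matOf τ).det + 1)]
  | one => rw [matOf_one, Matrix.det_one]
  | mul a b _ _ ha hb =>
    have h : matOf (a * b) = matOf b * matOf a := (matOf_mul b a).symm
    rw [h, Matrix.det_mul, ha, hb, mul_one]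
  | inv a _ ha =>
    have h : matOf a⁻¹ * matOf a = 1 := by rw [matOf_mul, mul_inv_cancel, matOf_one]
    have h2 := congrArg Matrix.det h
    rw [Matrix.det_mul, ha, mul_one, Matrix.det_one] at h2
    exact h2


lemma mapq_mul' {l m n : ℕ} (M : Matrix (Fin l) (Fin m) ℤ) (N : Matrix (Fin m) (Fin n) ℤ) :
    (M * N).map ((↑) : ℤ → ℚ) = M.map ((↑) : ℤ → ℚ) * N.map ((↑) : ℤ → ℚ) := by
  ext i j
  simp [Matrix.mul_apply]

lemma intvec_vecMul' {m n : ℕ} {x : Fin m → ℚ} (hx : IsIntVec x)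
    (Z : Matrix (Fin m) (Fin n) ℤ) :
    IsIntVec (Matrix.vecMul x (Z.map ((↑) : ℤ → ℚ))) := by
  intro i
  choose c hc using hx
  refine ⟨∑ j, c j * Z j i, ?_⟩
  simp only [Matrix.vecMul, dotProduct, Matrix.map_apply]
  push_cast
  exact Finset.sum_congr rfl fun j _ => by rw [hc j]

lemma vecMul_Pm (σ : Equiv.Perm (Fin 5)) (y : Fin 5 → ℚ) (l : Fin 5) :
    Matrix.vecMul y ((Pm σ).map ((↑) : ℤ → ℚ)) l = y (σ⁻¹ l) := by
  simp only [Matrix.vecMul, dotProduct, Matrix.map_apply, Pm,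
    PEquiv.toMatrix_apply, Equiv.toPEquiv_apply, Option.mem_def, Option.some.injEq]
  rw [Finset.sum_congr rfl (fun k (_ : k ∈ Finset.univ) => show
      y k * (((if σ k = l then (1:ℤ) else 0) : ℤ) : ℚ) = if k = σ⁻¹ l then y k else 0 from by
    by_cases h : k = σ⁻¹ l
    · subst h; simp
    · have h2 : σ k ≠ l := fun hl => h (by simp [← hl])
      rw [if_neg h2, if_neg h]; simp)]
  simp

lemma matOf_disc (σ : Equiv.Perm (Fin 5)) (x : Fin 4 → ℚ)
    (hx : IsIntVec (Matrix.vecMul x (QA4.map ((↑) : ℤ → ℚ)))) :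
    IsIntVec (Matrix.vecMul x ((matOf σ).map ((↑) : ℤ → ℚ)) - x) := by
  set y := Matrix.vecMul x (Emat.map ((↑) : ℤ → ℚ)) with hy
  obtain ⟨c0, h0⟩ := hx 0
  obtain ⟨c1, h1⟩ := hx 1
  obtain ⟨c2, h2⟩ := hx 2
  obtain ⟨c3, h3⟩ := hx 3
  simp only [Matrix.vecMul, dotProduct, Fin.sum_univ_four, Matrix.map_apply] at h0 h1 h2 h3
  simp [QA4] at h0 h1 h2 h3
  have hy5 : y = ![x 0, x 1 - x 0, x 2 - x 1, x 3 - x 2, -x 3] := by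
    funext k
    rw [hy]
    fin_cases k <;>
      simp [Matrix.vecMul, dotProduct, Fin.sum_univ_four, Emat, Matrix.map_apply,
        Matrix.vecHead, Matrix.vecTail] <;>
      ring
  have hdiff : ∀ a b : Fin 5, ∃ c : ℤ, y a - y b = (c : ℚ) := by
    intro a b
    rw [hy5]
    fin_cases a <;> fin_cases b <;>
      simp [Matrix.vecHead, Matrix.vecTail] <;>
    first
      | exact ⟨0, by push_cast; linarith⟩
      | exact ⟨0, by push_cast; linarith⟩
      | exact ⟨c0, by push_cast; linarith⟩
      | exact ⟨c0 + c1, by push_cast; linarith⟩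
      | exact ⟨c0 + c1 + c2, by push_cast; linarith⟩
      | exact ⟨c0 + c1 + c2 + c3, by push_cast; linarith⟩
      | exact ⟨-c0, by push_cast; linarith⟩
      | exact ⟨c1, by push_cast; linarith⟩
      | exact ⟨c1 + c2, by push_cast; linarith⟩
      | exact ⟨c1 + c2 + c3, by push_cast; linarith⟩
      | exact ⟨-(c0 + c1), by push_cast; linarith⟩
      | exact ⟨-c1, by push_cast; linarith⟩
      | exact ⟨c2, by push_cast; linarith⟩
      | exact ⟨c2 + c3, by push_cast; linarith⟩
      | exact ⟨-(c0 + c1 + c2), by push_cast; linarith⟩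
      | exact ⟨-(c1 + c2), by push_cast; linarith⟩
      | exact ⟨-c2, by push_cast; linarith⟩
      | exact ⟨c3, by push_cast; linarith⟩
      | exact ⟨-(c0 + c1 + c2 + c3), by push_cast; linarith⟩
      | exact ⟨-(c1 + c2 + c3), by push_cast; linarith⟩
      | exact ⟨-(c2 + c3), by push_cast; linarith⟩
      | exact ⟨-c3, by push_cast; linarith⟩
  have hmain : Matrix.vecMul x ((matOf σ).map ((↑) : ℤ → ℚ)) - x
      = Matrix.vecMul (Matrix.vecMul y ((Pm σ).map ((↑) : ℤ → ℚ)) - y)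
          (Smat.map ((↑) : ℤ → ℚ)) := by
    rw [Matrix.sub_vecMul]
    congr 1
    · rw [matOf, mapq_mul', mapq_mul', hy, ← Matrix.vecMul_vecMul, ← Matrix.vecMul_vecMul]
    · rw [hy, Matrix.vecMul_vecMul, ← mapq_mul']
      have h1 : Emat * Smat = 1 := by decide
      rw [h1]
      have h2 : ((1 : Matrix (Fin 4) (Fin 4) ℤ)).map ((↑) : ℤ → ℚ) = 1 :=
        Matrix.map_one _ Int.cast_zero Int.cast_one
      rw [h2, Matrix.vecMul_one]
  rw [hmain]
  have hint : IsIntVec (Matrix.vecMul y ((Pm σ).map ((↑) : ℤ → ℚ)) - y) := by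
    intro l
    obtain ⟨c, hc⟩ := hdiff (σ⁻¹ l) l
    exact ⟨c, by rw [Pi.sub_apply, vecMul_Pm]; exact hc⟩
  exact intvec_vecMul' hint Smat

def L20 : List (ℤ×ℤ×ℤ×ℤ) := [(-1,-1,-1,-1), (-1,-1,-1,0), (-1,-1,0,0), (-1,0,0,0), (0,-1,-1,-1), (0,-1,-1,0), (0,-1,0,0), (0,0,-1,-1), (0,0,-1,0), (0,0,0,-1), (0,0,0,1), (0,0,1,0), (0,0,1,1), (0,1,0,0), (0,1,1,0), (0,1,1,1), (1,0,0,0), (1,1,0,0), (1,1,1,0), (1,1,1,1)]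

set_option maxHeartbeats 2000000 in
def pairs60 : List (Equiv.Perm (Fin 5) × Matrix (Fin 4) (Fin 4) ℤ) := [(1, !![(1:ℤ), (0:ℤ), (0:ℤ), (0:ℤ); (0:ℤ), (1:ℤ), (0:ℤ), (0:ℤ); (0:ℤ), (0:ℤ), (1:ℤ), (0:ℤ); (0:ℤ), (0:ℤ), (0:ℤ), (1:ℤ)]),
  (c[(2:Fin 5), 3, 4], !![(1:ℤ), (0:ℤ), (0:ℤ), (0:ℤ); (0:ℤ), (1:ℤ), (1:ℤ), (0:ℤ); (0:ℤ), (0:ℤ), (0:ℤ), (1:ℤ); (0:ℤ), (0:ℤ), (-1:ℤ), (-1:ℤ)]),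
  (c[(2:Fin 5), 4, 3], !![(1:ℤ), (0:ℤ), (0:ℤ), (0:ℤ); (0:ℤ), (1:ℤ), (1:ℤ), (1:ℤ); (0:ℤ), (0:ℤ), (-1:ℤ), (-1:ℤ); (0:ℤ), (0:ℤ), (1:ℤ), (0:ℤ)]),
  (c[(1:Fin 5), 2] * c[(3:Fin 5), 4], !![(1:ℤ), (1:ℤ), (0:ℤ), (0:ℤ); (0:ℤ), (-1:ℤ), (0:ℤ), (0:ℤ); (0:ℤ), (1:ℤ), (1:ℤ), (1:ℤ); (0:ℤ), (0:ℤ), (0:ℤ), (-1:ℤ)]),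
  (c[(1:Fin 5), 2, 3], !![(1:ℤ), (1:ℤ), (0:ℤ), (0:ℤ); (0:ℤ), (0:ℤ), (1:ℤ), (0:ℤ); (0:ℤ), (-1:ℤ), (-1:ℤ), (0:ℤ); (0:ℤ), (1:ℤ), (1:ℤ), (1:ℤ)]),
  (c[(1:Fin 5), 2, 4], !![(1:ℤ), (1:ℤ), (0:ℤ), (0:ℤ); (0:ℤ), (0:ℤ), (1:ℤ), (1:ℤ); (0:ℤ), (0:ℤ), (0:ℤ), (-1:ℤ); (0:ℤ), (-1:ℤ), (-1:ℤ), (0:ℤ)]),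
  (c[(1:Fin 5), 3, 2], !![(1:ℤ), (1:ℤ), (1:ℤ), (0:ℤ); (0:ℤ), (-1:ℤ), (-1:ℤ), (0:ℤ); (0:ℤ), (1:ℤ), (0:ℤ), (0:ℤ); (0:ℤ), (0:ℤ), (1:ℤ), (1:ℤ)]),
  (c[(1:Fin 5), 3, 4], !![(1:ℤ), (1:ℤ), (1:ℤ), (0:ℤ); (0:ℤ), (0:ℤ), (-1:ℤ), (0:ℤ); (0:ℤ), (0:ℤ), (1:ℤ), (1:ℤ); (0:ℤ), (-1:ℤ), (-1:ℤ), (-1:ℤ)]),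
  (c[(1:Fin 5), 3] * c[(2:Fin 5), 4], !![(1:ℤ), (1:ℤ), (1:ℤ), (0:ℤ); (0:ℤ), (0:ℤ), (0:ℤ), (1:ℤ); (0:ℤ), (-1:ℤ), (-1:ℤ), (-1:ℤ); (0:ℤ), (1:ℤ), (0:ℤ), (0:ℤ)]),
  (c[(1:Fin 5), 4, 2], !![(1:ℤ), (1:ℤ), (1:ℤ), (1:ℤ); (0:ℤ), (-1:ℤ), (-1:ℤ), (-1:ℤ); (0:ℤ), (1:ℤ), (1:ℤ), (0:ℤ); (0:ℤ), (0:ℤ), (-1:ℤ), (0:ℤ)]),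
  (c[(1:Fin 5), 4, 3], !![(1:ℤ), (1:ℤ), (1:ℤ), (1:ℤ); (0:ℤ), (0:ℤ), (-1:ℤ), (-1:ℤ); (0:ℤ), (-1:ℤ), (0:ℤ), (0:ℤ); (0:ℤ), (1:ℤ), (1:ℤ), (0:ℤ)]),
  (c[(1:Fin 5), 4] * c[(2:Fin 5), 3], !![(1:ℤ), (1:ℤ), (1:ℤ), (1:ℤ); (0:ℤ), (0:ℤ), (0:ℤ), (-1:ℤ); (0:ℤ), (0:ℤ), (-1:ℤ), (0:ℤ); (0:ℤ), (-1:ℤ), (0:ℤ), (0:ℤ)]),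
  (c[(0:Fin 5), 1] * c[(3:Fin 5), 4], !![(-1:ℤ), (0:ℤ), (0:ℤ), (0:ℤ); (1:ℤ), (1:ℤ), (0:ℤ), (0:ℤ); (0:ℤ), (0:ℤ), (1:ℤ), (1:ℤ); (0:ℤ), (0:ℤ), (0:ℤ), (-1:ℤ)]),
  (c[(0:Fin 5), 1] * c[(2:Fin 5), 3], !![(-1:ℤ), (0:ℤ), (0:ℤ), (0:ℤ); (1:ℤ), (1:ℤ), (1:ℤ), (0:ℤ); (0:ℤ), (0:ℤ), (-1:ℤ), (0:ℤ); (0:ℤ), (0:ℤ), (1:ℤ), (1:ℤ)]),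
  (c[(0:Fin 5), 1] * c[(2:Fin 5), 4], !![(-1:ℤ), (0:ℤ), (0:ℤ), (0:ℤ); (1:ℤ), (1:ℤ), (1:ℤ), (1:ℤ); (0:ℤ), (0:ℤ), (0:ℤ), (-1:ℤ); (0:ℤ), (0:ℤ), (-1:ℤ), (0:ℤ)]),
  (c[(0:Fin 5), 1, 2], !![(0:ℤ), (1:ℤ), (0:ℤ), (0:ℤ); (-1:ℤ), (-1:ℤ), (0:ℤ), (0:ℤ); (1:ℤ), (1:ℤ), (1:ℤ), (0:ℤ); (0:ℤ), (0:ℤ), (0:ℤ), (1:ℤ)]),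
  (c[(0:Fin 5), 1, 2, 3, 4], !![(0:ℤ), (1:ℤ), (0:ℤ), (0:ℤ); (0:ℤ), (0:ℤ), (1:ℤ), (0:ℤ); (0:ℤ), (0:ℤ), (0:ℤ), (1:ℤ); (-1:ℤ), (-1:ℤ), (-1:ℤ), (-1:ℤ)]),
  (c[(0:Fin 5), 1, 2, 4, 3], !![(0:ℤ), (1:ℤ), (0:ℤ), (0:ℤ); (0:ℤ), (0:ℤ), (1:ℤ), (1:ℤ); (-1:ℤ), (-1:ℤ), (-1:ℤ), (-1:ℤ); (1:ℤ), (1:ℤ), (1:ℤ), (0:ℤ)]),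
  (c[(0:Fin 5), 1, 3, 4, 2], !![(0:ℤ), (1:ℤ), (1:ℤ), (0:ℤ); (-1:ℤ), (-1:ℤ), (-1:ℤ), (0:ℤ); (1:ℤ), (1:ℤ), (1:ℤ), (1:ℤ); (0:ℤ), (0:ℤ), (-1:ℤ), (-1:ℤ)]),
  (c[(0:Fin 5), 1, 3], !![(0:ℤ), (1:ℤ), (1:ℤ), (0:ℤ); (0:ℤ), (0:ℤ), (-1:ℤ), (0:ℤ); (-1:ℤ), (-1:ℤ), (0:ℤ), (0:ℤ); (1:ℤ), (1:ℤ), (1:ℤ), (1:ℤ)]),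
  (c[(0:Fin 5), 1, 3, 2, 4], !![(0:ℤ), (1:ℤ), (1:ℤ), (0:ℤ); (0:ℤ), (0:ℤ), (0:ℤ), (1:ℤ); (0:ℤ), (0:ℤ), (-1:ℤ), (-1:ℤ); (-1:ℤ), (-1:ℤ), (0:ℤ), (0:ℤ)]),
  (c[(0:Fin 5), 1, 4, 3, 2], !![(0:ℤ), (1:ℤ), (1:ℤ), (1:ℤ); (-1:ℤ), (-1:ℤ), (-1:ℤ), (-1:ℤ); (1:ℤ), (1:ℤ), (0:ℤ), (0:ℤ); (0:ℤ), (0:ℤ), (1:ℤ), (0:ℤ)]),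
  (c[(0:Fin 5), 1, 4], !![(0:ℤ), (1:ℤ), (1:ℤ), (1:ℤ); (0:ℤ), (0:ℤ), (-1:ℤ), (-1:ℤ); (0:ℤ), (0:ℤ), (1:ℤ), (0:ℤ); (-1:ℤ), (-1:ℤ), (-1:ℤ), (0:ℤ)]),
  (c[(0:Fin 5), 1, 4, 2, 3], !![(0:ℤ), (1:ℤ), (1:ℤ), (1:ℤ); (0:ℤ), (0:ℤ), (0:ℤ), (-1:ℤ); (-1:ℤ), (-1:ℤ), (-1:ℤ), (0:ℤ); (1:ℤ), (1:ℤ), (0:ℤ), (0:ℤ)]),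
  (c[(0:Fin 5), 2, 1], !![(-1:ℤ), (-1:ℤ), (0:ℤ), (0:ℤ); (1:ℤ), (0:ℤ), (0:ℤ), (0:ℤ); (0:ℤ), (1:ℤ), (1:ℤ), (0:ℤ); (0:ℤ), (0:ℤ), (0:ℤ), (1:ℤ)]),
  (c[(0:Fin 5), 2, 3, 4, 1], !![(-1:ℤ), (-1:ℤ), (0:ℤ), (0:ℤ); (1:ℤ), (1:ℤ), (1:ℤ), (0:ℤ); (0:ℤ), (0:ℤ), (0:ℤ), (1:ℤ); (0:ℤ), (-1:ℤ), (-1:ℤ), (-1:ℤ)]),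
  (c[(0:Fin 5), 2, 4, 3, 1], !![(-1:ℤ), (-1:ℤ), (0:ℤ), (0:ℤ); (1:ℤ), (1:ℤ), (1:ℤ), (1:ℤ); (0:ℤ), (-1:ℤ), (-1:ℤ), (-1:ℤ); (0:ℤ), (1:ℤ), (1:ℤ), (0:ℤ)]),
  (c[(0:Fin 5), 2] * c[(3:Fin 5), 4], !![(0:ℤ), (-1:ℤ), (0:ℤ), (0:ℤ); (-1:ℤ), (0:ℤ), (0:ℤ), (0:ℤ); (1:ℤ), (1:ℤ), (1:ℤ), (1:ℤ); (0:ℤ), (0:ℤ), (0:ℤ), (-1:ℤ)]),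
  (c[(0:Fin 5), 2, 3], !![(0:ℤ), (-1:ℤ), (0:ℤ), (0:ℤ); (0:ℤ), (1:ℤ), (1:ℤ), (0:ℤ); (-1:ℤ), (-1:ℤ), (-1:ℤ), (0:ℤ); (1:ℤ), (1:ℤ), (1:ℤ), (1:ℤ)]),
  (c[(0:Fin 5), 2, 4], !![(0:ℤ), (-1:ℤ), (0:ℤ), (0:ℤ); (0:ℤ), (1:ℤ), (1:ℤ), (1:ℤ); (0:ℤ), (0:ℤ), (0:ℤ), (-1:ℤ); (-1:ℤ), (-1:ℤ), (-1:ℤ), (0:ℤ)]),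
  (c[(0:Fin 5), 2] * c[(1:Fin 5), 3], !![(0:ℤ), (0:ℤ), (1:ℤ), (0:ℤ); (-1:ℤ), (-1:ℤ), (-1:ℤ), (0:ℤ); (1:ℤ), (0:ℤ), (0:ℤ), (0:ℤ); (0:ℤ), (1:ℤ), (1:ℤ), (1:ℤ)]),
  (c[(0:Fin 5), 2, 1, 3, 4], !![(0:ℤ), (0:ℤ), (1:ℤ), (0:ℤ); (0:ℤ), (-1:ℤ), (-1:ℤ), (0:ℤ); (0:ℤ), (1:ℤ), (1:ℤ), (1:ℤ); (-1:ℤ), (-1:ℤ), (-1:ℤ), (-1:ℤ)]),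
  (c[(0:Fin 5), 2, 4, 1, 3], !![(0:ℤ), (0:ℤ), (1:ℤ), (0:ℤ); (0:ℤ), (0:ℤ), (0:ℤ), (1:ℤ); (-1:ℤ), (-1:ℤ), (-1:ℤ), (-1:ℤ); (1:ℤ), (0:ℤ), (0:ℤ), (0:ℤ)]),
  (c[(0:Fin 5), 2] * c[(1:Fin 5), 4], !![(0:ℤ), (0:ℤ), (1:ℤ), (1:ℤ); (-1:ℤ), (-1:ℤ), (-1:ℤ), (-1:ℤ); (1:ℤ), (1:ℤ), (1:ℤ), (0:ℤ); (0:ℤ), (-1:ℤ), (-1:ℤ), (0:ℤ)]),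
  (c[(0:Fin 5), 2, 1, 4, 3], !![(0:ℤ), (0:ℤ), (1:ℤ), (1:ℤ); (0:ℤ), (-1:ℤ), (-1:ℤ), (-1:ℤ); (-1:ℤ), (0:ℤ), (0:ℤ), (0:ℤ); (1:ℤ), (1:ℤ), (1:ℤ), (0:ℤ)]),
  (c[(0:Fin 5), 2, 3, 1, 4], !![(0:ℤ), (0:ℤ), (1:ℤ), (1:ℤ); (0:ℤ), (0:ℤ), (0:ℤ), (-1:ℤ); (0:ℤ), (-1:ℤ), (-1:ℤ), (0:ℤ); (-1:ℤ), (0:ℤ), (0:ℤ), (0:ℤ)]),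
  (c[(0:Fin 5), 3, 4, 2, 1], !![(-1:ℤ), (-1:ℤ), (-1:ℤ), (0:ℤ); (1:ℤ), (0:ℤ), (0:ℤ), (0:ℤ); (0:ℤ), (1:ℤ), (1:ℤ), (1:ℤ); (0:ℤ), (0:ℤ), (-1:ℤ), (-1:ℤ)]),
  (c[(0:Fin 5), 3, 1], !![(-1:ℤ), (-1:ℤ), (-1:ℤ), (0:ℤ); (1:ℤ), (1:ℤ), (0:ℤ), (0:ℤ); (0:ℤ), (-1:ℤ), (0:ℤ), (0:ℤ); (0:ℤ), (1:ℤ), (1:ℤ), (1:ℤ)]),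
  (c[(0:Fin 5), 3, 2, 4, 1], !![(-1:ℤ), (-1:ℤ), (-1:ℤ), (0:ℤ); (1:ℤ), (1:ℤ), (1:ℤ), (1:ℤ); (0:ℤ), (0:ℤ), (-1:ℤ), (-1:ℤ); (0:ℤ), (-1:ℤ), (0:ℤ), (0:ℤ)]),
  (c[(0:Fin 5), 3, 2], !![(0:ℤ), (-1:ℤ), (-1:ℤ), (0:ℤ); (-1:ℤ), (0:ℤ), (0:ℤ), (0:ℤ); (1:ℤ), (1:ℤ), (0:ℤ), (0:ℤ); (0:ℤ), (0:ℤ), (1:ℤ), (1:ℤ)]),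
  (c[(0:Fin 5), 3, 4], !![(0:ℤ), (-1:ℤ), (-1:ℤ), (0:ℤ); (0:ℤ), (1:ℤ), (0:ℤ), (0:ℤ); (0:ℤ), (0:ℤ), (1:ℤ), (1:ℤ); (-1:ℤ), (-1:ℤ), (-1:ℤ), (-1:ℤ)]),
  (c[(0:Fin 5), 3] * c[(2:Fin 5), 4], !![(0:ℤ), (-1:ℤ), (-1:ℤ), (0:ℤ); (0:ℤ), (1:ℤ), (1:ℤ), (1:ℤ); (-1:ℤ), (-1:ℤ), (-1:ℤ), (-1:ℤ); (1:ℤ), (1:ℤ), (0:ℤ), (0:ℤ)]),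
  (c[(0:Fin 5), 3, 4, 1, 2], !![(0:ℤ), (0:ℤ), (-1:ℤ), (0:ℤ); (-1:ℤ), (-1:ℤ), (0:ℤ), (0:ℤ); (1:ℤ), (1:ℤ), (1:ℤ), (1:ℤ); (0:ℤ), (-1:ℤ), (-1:ℤ), (-1:ℤ)]),
  (c[(0:Fin 5), 3] * c[(1:Fin 5), 2], !![(0:ℤ), (0:ℤ), (-1:ℤ), (0:ℤ); (0:ℤ), (-1:ℤ), (0:ℤ), (0:ℤ); (-1:ℤ), (0:ℤ), (0:ℤ), (0:ℤ); (1:ℤ), (1:ℤ), (1:ℤ), (1:ℤ)]),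
  (c[(0:Fin 5), 3, 1, 2, 4], !![(0:ℤ), (0:ℤ), (-1:ℤ), (0:ℤ); (0:ℤ), (0:ℤ), (1:ℤ), (1:ℤ); (0:ℤ), (-1:ℤ), (-1:ℤ), (-1:ℤ); (-1:ℤ), (0:ℤ), (0:ℤ), (0:ℤ)]),
  (c[(0:Fin 5), 3, 1, 4, 2], !![(0:ℤ), (0:ℤ), (0:ℤ), (1:ℤ); (-1:ℤ), (-1:ℤ), (-1:ℤ), (-1:ℤ); (1:ℤ), (0:ℤ), (0:ℤ), (0:ℤ); (0:ℤ), (1:ℤ), (0:ℤ), (0:ℤ)]),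
  (c[(0:Fin 5), 3, 2, 1, 4], !![(0:ℤ), (0:ℤ), (0:ℤ), (1:ℤ); (0:ℤ), (-1:ℤ), (-1:ℤ), (-1:ℤ); (0:ℤ), (1:ℤ), (0:ℤ), (0:ℤ); (-1:ℤ), (-1:ℤ), (0:ℤ), (0:ℤ)]),
  (c[(0:Fin 5), 3] * c[(1:Fin 5), 4], !![(0:ℤ), (0:ℤ), (0:ℤ), (1:ℤ); (0:ℤ), (0:ℤ), (-1:ℤ), (-1:ℤ); (-1:ℤ), (-1:ℤ), (0:ℤ), (0:ℤ); (1:ℤ), (0:ℤ), (0:ℤ), (0:ℤ)]),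
  (c[(0:Fin 5), 4, 3, 2, 1], !![(-1:ℤ), (-1:ℤ), (-1:ℤ), (-1:ℤ); (1:ℤ), (0:ℤ), (0:ℤ), (0:ℤ); (0:ℤ), (1:ℤ), (0:ℤ), (0:ℤ); (0:ℤ), (0:ℤ), (1:ℤ), (0:ℤ)]),
  (c[(0:Fin 5), 4, 1], !![(-1:ℤ), (-1:ℤ), (-1:ℤ), (-1:ℤ); (1:ℤ), (1:ℤ), (0:ℤ), (0:ℤ); (0:ℤ), (0:ℤ), (1:ℤ), (0:ℤ); (0:ℤ), (-1:ℤ), (-1:ℤ), (0:ℤ)]),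
  (c[(0:Fin 5), 4, 2, 3, 1], !![(-1:ℤ), (-1:ℤ), (-1:ℤ), (-1:ℤ); (1:ℤ), (1:ℤ), (1:ℤ), (0:ℤ); (0:ℤ), (-1:ℤ), (-1:ℤ), (0:ℤ); (0:ℤ), (1:ℤ), (0:ℤ), (0:ℤ)]),
  (c[(0:Fin 5), 4, 2], !![(0:ℤ), (-1:ℤ), (-1:ℤ), (-1:ℤ); (-1:ℤ), (0:ℤ), (0:ℤ), (0:ℤ); (1:ℤ), (1:ℤ), (1:ℤ), (0:ℤ); (0:ℤ), (0:ℤ), (-1:ℤ), (0:ℤ)]),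
  (c[(0:Fin 5), 4, 3], !![(0:ℤ), (-1:ℤ), (-1:ℤ), (-1:ℤ); (0:ℤ), (1:ℤ), (0:ℤ), (0:ℤ); (-1:ℤ), (-1:ℤ), (0:ℤ), (0:ℤ); (1:ℤ), (1:ℤ), (1:ℤ), (0:ℤ)]),
  (c[(0:Fin 5), 4] * c[(2:Fin 5), 3], !![(0:ℤ), (-1:ℤ), (-1:ℤ), (-1:ℤ); (0:ℤ), (1:ℤ), (1:ℤ), (0:ℤ); (0:ℤ), (0:ℤ), (-1:ℤ), (0:ℤ); (-1:ℤ), (-1:ℤ), (0:ℤ), (0:ℤ)]),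
  (c[(0:Fin 5), 4, 3, 1, 2], !![(0:ℤ), (0:ℤ), (-1:ℤ), (-1:ℤ); (-1:ℤ), (-1:ℤ), (0:ℤ), (0:ℤ); (1:ℤ), (0:ℤ), (0:ℤ), (0:ℤ); (0:ℤ), (1:ℤ), (1:ℤ), (0:ℤ)]),
  (c[(0:Fin 5), 4] * c[(1:Fin 5), 2], !![(0:ℤ), (0:ℤ), (-1:ℤ), (-1:ℤ); (0:ℤ), (-1:ℤ), (0:ℤ), (0:ℤ); (0:ℤ), (1:ℤ), (1:ℤ), (0:ℤ); (-1:ℤ), (-1:ℤ), (-1:ℤ), (0:ℤ)]),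
  (c[(0:Fin 5), 4, 1, 2, 3], !![(0:ℤ), (0:ℤ), (-1:ℤ), (-1:ℤ); (0:ℤ), (0:ℤ), (1:ℤ), (0:ℤ); (-1:ℤ), (-1:ℤ), (-1:ℤ), (0:ℤ); (1:ℤ), (0:ℤ), (0:ℤ), (0:ℤ)]),
  (c[(0:Fin 5), 4, 1, 3, 2], !![(0:ℤ), (0:ℤ), (0:ℤ), (-1:ℤ); (-1:ℤ), (-1:ℤ), (-1:ℤ), (0:ℤ); (1:ℤ), (1:ℤ), (0:ℤ), (0:ℤ); (0:ℤ), (-1:ℤ), (0:ℤ), (0:ℤ)]),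
  (c[(0:Fin 5), 4, 2, 1, 3], !![(0:ℤ), (0:ℤ), (0:ℤ), (-1:ℤ); (0:ℤ), (-1:ℤ), (-1:ℤ), (0:ℤ); (-1:ℤ), (0:ℤ), (0:ℤ), (0:ℤ); (1:ℤ), (1:ℤ), (0:ℤ), (0:ℤ)]),
  (c[(0:Fin 5), 4] * c[(1:Fin 5), 3], !![(0:ℤ), (0:ℤ), (0:ℤ), (-1:ℤ); (0:ℤ), (0:ℤ), (-1:ℤ), (0:ℤ); (0:ℤ), (-1:ℤ), (0:ℤ), (0:ℤ); (-1:ℤ), (0:ℤ), (0:ℤ), (0:ℤ)])]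

def L60 : List (Matrix (Fin 4) (Fin 4) ℤ) := pairs60.map Prod.snd

def bf (r s : ℤ×ℤ×ℤ×ℤ) : ℤ :=
  2*r.1*s.1 + 2*r.2.1*s.2.1 + 2*r.2.2.1*s.2.2.1 + 2*r.2.2.2*s.2.2.2
  - r.1*s.2.1 - r.2.1*s.1 - r.2.1*s.2.2.1 - r.2.2.1*s.2.1 - r.2.2.1*s.2.2.2 - r.2.2.2*s.2.2.1

def toM (r0 r1 r2 r3 : ℤ×ℤ×ℤ×ℤ) : Matrix (Fin 4) (Fin 4) ℤ :=
  !![r0.1, r0.2.1, r0.2.2.1, r0.2.2.2; r1.1, r1.2.1, r1.2.2.1, r1.2.2.2;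
     r2.1, r2.2.1, r2.2.2.1, r2.2.2.2; r3.1, r3.2.1, r3.2.2.1, r3.2.2.2]

def A4adj : Matrix (Fin 4) (Fin 4) ℤ := !![4,3,2,1; 3,6,4,2; 2,4,6,3; 1,2,3,4]

def discB (M : Matrix (Fin 4) (Fin 4) ℤ) : Prop :=
  ∀ i j, (A4adj * (M - 1)) i j % 5 = 0

instance (M : Matrix (Fin 4) (Fin 4) ℤ) : Decidable (discB M) := by
  unfold discB; infer_instance

def detp (M : Matrix (Fin 4) (Fin 4) ℤ) : ℤ :=
    M 0 0 * (M 1 1 * (M 2 2 * M 3 3 - M 2 3 * M 3 2) - M 1 2 * (M 2 1 * M 3 3 - M 2 3 * M 3 1) + M 1 3 * (M 2 1 * M 3 2 - M 2 2 * M 3 1))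
  - M 0 1 * (M 1 0 * (M 2 2 * M 3 3 - M 2 3 * M 3 2) - M 1 2 * (M 2 0 * M 3 3 - M 2 3 * M 3 0) + M 1 3 * (M 2 0 * M 3 2 - M 2 2 * M 3 0))
  + M 0 2 * (M 1 0 * (M 2 1 * M 3 3 - M 2 3 * M 3 1) - M 1 1 * (M 2 0 * M 3 3 - M 2 3 * M 3 0) + M 1 3 * (M 2 0 * M 3 1 - M 2 1 * M 3 0))
  - M 0 3 * (M 1 0 * (M 2 1 * M 3 2 - M 2 2 * M 3 1) - M 1 1 * (M 2 0 * M 3 2 - M 2 2 * M 3 0) + M 1 2 * (M 2 0 * M 3 1 - M 2 1 * M 3 0))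

set_option maxHeartbeats 12000000 in
lemma bigD : ∀ r0 ∈ L20, ∀ r1 ∈ L20, bf r0 r1 = -1 → ∀ r2 ∈ L20, bf r1 r2 = -1 → bf r0 r2 = 0 →
    ∀ r3 ∈ L20, bf r2 r3 = -1 → bf r0 r3 = 0 → bf r1 r3 = 0 →
    detp (toM r0 r1 r2 r3) = 1 → discB (toM r0 r1 r2 r3) → toM r0 r1 r2 r3 ∈ L60 := by decide

set_option maxHeartbeats 4000000 in
lemma pairs60_spec : ∀ p ∈ pairs60, Equiv.Perm.sign p.1 = 1 ∧ matOf p.1 = p.2 := by decide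

set_option maxHeartbeats 2000000 in
lemma root_classify (a b c d : ℤ) (h : bf (a,b,c,d) (a,b,c,d) = 2) : (a,b,c,d) ∈ L20 := by
  simp only [bf] at h
  have h5 : a^2 + (a-b)^2 + (b-c)^2 + (c-d)^2 + d^2 = 2 := by ring_nf; ring_nf at h; linarith
  have ha1 : -1 ≤ a := by nlinarith [sq_nonneg (a+1), sq_nonneg (a-b), sq_nonneg (b-c), sq_nonneg (c-d), sq_nonneg d]
  have ha2 : a ≤ 1 := by nlinarith [sq_nonneg (a-1), sq_nonneg (a-b), sq_nonneg (b-c), sq_nonneg (c-d), sq_nonneg d]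
  have hd1 : -1 ≤ d := by nlinarith [sq_nonneg (d+1), sq_nonneg (a-b), sq_nonneg (b-c), sq_nonneg (c-d), sq_nonneg a]
  have hd2 : d ≤ 1 := by nlinarith [sq_nonneg (d-1), sq_nonneg (a-b), sq_nonneg (b-c), sq_nonneg (c-d), sq_nonneg a]
  have hb1 : -2 ≤ b := by nlinarith [sq_nonneg (a+1), sq_nonneg (a-b+1), sq_nonneg (b-c), sq_nonneg (c-d), sq_nonneg d]
  have hb2 : b ≤ 2 := by nlinarith [sq_nonneg (a-1), sq_nonneg (a-b-1), sq_nonneg (b-c), sq_nonneg (c-d), sq_nonneg d]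
  have hc1 : -2 ≤ c := by nlinarith [sq_nonneg (d+1), sq_nonneg (c-d+1), sq_nonneg (b-c), sq_nonneg (a-b), sq_nonneg a]
  have hc2 : c ≤ 2 := by nlinarith [sq_nonneg (d-1), sq_nonneg (c-d-1), sq_nonneg (b-c), sq_nonneg (a-b), sq_nonneg a]
  clear h
  interval_cases a <;> interval_cases b <;> interval_cases c <;> interval_cases d <;> revert h5 <;> decide


lemma detp_eq (M : Matrix (Fin 4) (Fin 4) ℤ) : M.det = detp M := by
  rw [show M = !![M 0 0, M 0 1, M 0 2, M 0 3; M 1 0, M 1 1, M 1 2, M 1 3;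
    M 2 0, M 2 1, M 2 2, M 2 3; M 3 0, M 3 1, M 3 2, M 3 3] from by
      ext i j; fin_cases i <;> fin_cases j <;> simp]
  simp [Matrix.det_succ_row_zero, Fin.sum_univ_succ, _root_.detp, Matrix.vecHead, Matrix.vecTail,
    Fin.succAbove, Fin.castSucc, Fin.castAdd, Fin.castLE]
  ring

lemma gram_entries (V : Matrix (Fin 4) (Fin 4) ℤ) (h : V * QA4 * Vᵀ = QA4) (i j : Fin 4) :
    bf (V i 0, V i 1, V i 2, V i 3) (V j 0, V j 1, V j 2, V j 3) = QA4 i j := by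
  have hh := congrFun (congrFun h i) j
  simp only [Matrix.mul_apply, Fin.sum_univ_four, Matrix.transpose_apply] at hh
  simp only [bf]
  rw [← hh]
  simp [QA4, Matrix.vecHead, Matrix.vecTail]
  ring

set_option maxHeartbeats 1000000 in
lemma disc_extract (V : Matrix (Fin 4) (Fin 4) ℤ)
    (h3 : ∀ x : Fin 4 → ℚ, IsIntVec (Matrix.vecMul x (QA4.map ((↑) : ℤ → ℚ))) →
      IsIntVec (Matrix.vecMul x (V.map ((↑) : ℤ → ℚ)) - x)) : discB V := by
  intro i j
  set x : Fin 4 → ℚ := fun k => (A4adj i k : ℚ)/5 with hxdef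
  have hx : IsIntVec (Matrix.vecMul x (QA4.map ((↑) : ℤ → ℚ))) := by
    intro l
    refine ⟨if i = l then 1 else 0, ?_⟩
    fin_cases i <;> fin_cases l <;>
      simp [hxdef, Matrix.vecMul, dotProduct, Fin.sum_univ_four, QA4, A4adj,
        Matrix.vecHead, Matrix.vecTail] <;> norm_num
  obtain ⟨c, hc⟩ := h3 x hx j
  rw [Pi.sub_apply] at hc
  have hAV : (((A4adj * V) i j : ℤ) : ℚ) = 5 * (Matrix.vecMul x (V.map ((↑) : ℤ → ℚ)) j) := by
    simp only [Matrix.mul_apply, Fin.sum_univ_four, Matrix.vecMul, dotProduct,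
      Matrix.map_apply, hxdef]
    push_cast
    ring
  have hAx : ((A4adj i j : ℤ) : ℚ) = 5 * x j := by
    rw [hxdef]; ring
  have key : (((A4adj * V) i j - A4adj i j : ℤ) : ℚ) = 5 * c := by
    push_cast
    push_cast at hAV hAx
    linarith [hc, hAV, hAx]
  have key2 : (A4adj * (V - 1)) i j = 5 * c := by
    have hsub : (A4adj * (V - 1)) i j = (A4adj * V) i j - A4adj i j := by
      rw [Matrix.mul_sub, Matrix.mul_one, Matrix.sub_apply]
    rw [hsub]
    exact_mod_cast key
  omega

lemma V_eq_toM (V : Matrix (Fin 4) (Fin 4) ℤ) :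
    V = toM (V 0 0, V 0 1, V 0 2, V 0 3) (V 1 0, V 1 1, V 1 2, V 1 3)
          (V 2 0, V 2 1, V 2 2, V 2 3) (V 3 0, V 3 1, V 3 2, V 3 3) := by
  ext i j; fin_cases i <;> fin_cases j <;> simp [toM]

noncomputable def psi : Equiv.Perm (Fin 5) →* (Matrix (Fin 4) (Fin 4) ℤ)ˣ where
  toFun σ :=
    { val := matOf σ⁻¹, inv := matOf σ,
      val_inv := by rw [matOf_mul, mul_inv_cancel, matOf_one],
      inv_val := by rw [matOf_mul, inv_mul_cancel, matOf_one] }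
  map_one' := Units.ext (by show matOf (1:Equiv.Perm (Fin 5))⁻¹ = 1; rw [inv_one, matOf_one])
  map_mul' σ τ := Units.ext (by
    show matOf (σ * τ)⁻¹ = matOf σ⁻¹ * matOf τ⁻¹
    rw [matOf_mul, _root_.mul_inv_rev])

lemma psi_mem (σ : Equiv.Perm (Fin 5)) (hσ : σ ∈ alternatingGroup (Fin 5)) :
    psi σ ∈ SOzero QA4 :=
  ⟨matOf_gram σ⁻¹, matOf_det σ⁻¹ (inv_mem hσ), fun x hx => matOf_disc σ⁻¹ x hx⟩

noncomputable def phi : alternatingGroup (Fin 5) →* SOzero QA4 :=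
  MonoidHom.codRestrict (psi.comp (alternatingGroup (Fin 5)).subtype) _
    (fun σ => psi_mem σ.1 σ.2)

lemma phi_surj : Function.Surjective phi := by
  rintro ⟨U, hU⟩
  obtain ⟨h1, h2, h3⟩ := hU
  set V := (U : Matrix (Fin 4) (Fin 4) ℤ) with hV
  have key := gram_entries V h1
  have hVt := V_eq_toM V
  have hr : ∀ i : Fin 4, (V i 0, V i 1, V i 2, V i 3) ∈ L20 := by
    intro i
    apply root_classify
    have := key i i
    rw [this]
    fin_cases i <;> decide
  have hdet : detp (toM (V 0 0, V 0 1, V 0 2, V 0 3) (V 1 0, V 1 1, V 1 2, V 1 3)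
      (V 2 0, V 2 1, V 2 2, V 2 3) (V 3 0, V 3 1, V 3 2, V 3 3)) = 1 := by
    rw [← hVt, ← detp_eq]; exact h2
  have hdisc : discB (toM (V 0 0, V 0 1, V 0 2, V 0 3) (V 1 0, V 1 1, V 1 2, V 1 3)
      (V 2 0, V 2 1, V 2 2, V 2 3) (V 3 0, V 3 1, V 3 2, V 3 3)) := by
    rw [← hVt]; exact disc_extract V h3
  have hmem : V ∈ L60 := by
    rw [hVt]
    exact bigD _ (hr 0) _ (hr 1)
      (by rw [key 0 1]; decide) _ (hr 2)
      (by rw [key 1 2]; decide) (by rw [key 0 2]; decide) _ (hr 3)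
      (by rw [key 2 3]; decide) (by rw [key 0 3]; decide) (by rw [key 1 3]; decide)
      hdet hdisc
  rw [L60, List.mem_map] at hmem
  obtain ⟨p, hp, hpV⟩ := hmem
  obtain ⟨hsgn, hmat⟩ := pairs60_spec p hp
  have hσA : p.1⁻¹ ∈ alternatingGroup (Fin 5) := by
    rw [Equiv.Perm.mem_alternatingGroup, map_inv, hsgn]; rfl
  refine ⟨⟨p.1⁻¹, hσA⟩, ?_⟩
  apply Subtype.ext
  apply Units.ext
  show matOf p.1⁻¹⁻¹ = V
  rw [inv_inv, hmat, hpV]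

lemma phi_inj : Function.Injective phi := by
  rw [← MonoidHom.ker_eq_bot_iff]
  rcases Subgroup.Normal.eq_bot_or_eq_top (inferInstance : phi.ker.Normal) with h | h
  · exact h
  · exfalso
    have hc : (⟨c[(0:Fin 5),1,2], by rw [Equiv.Perm.mem_alternatingGroup]; decide⟩ :
        alternatingGroup (Fin 5)) ∈ phi.ker := by rw [h]; trivial
    rw [MonoidHom.mem_ker] at hc
    have := congrArg (fun z => ((z : SOzero QA4) : (Matrix (Fin 4) (Fin 4) ℤ)ˣ).val) hc
    have h2 : matOf (c[(0:Fin 5),1,2])⁻¹ = 1 := this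
    revert h2
    decide


noncomputable def theEquiv : alternatingGroup (Fin 5) ≃* SOzero QA4 :=
  MulEquiv.ofBijective phi ⟨phi_inj, phi_surj⟩

theorem statement9 :
    Nonempty (↥(SOzero QA4) ≃* ↥(alternatingGroup (Fin 5))) ∧
    Nat.card ↥(SOzero QA4) = 60 := by
  constructor
  · exact ⟨theEquiv.symm⟩
  · rw [Nat.card_congr theEquiv.symm.toEquiv, Nat.card_eq_fintype_card]
    have h := two_mul_card_alternatingGroup (α := Fin 5)
    rw [Fintype.card_perm, Fintype.card_fin] at h
    have h5 : Nat.factorial 5 = 120 := by decide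
    rw [h5] at h
    omega
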